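/- Let G = (A, X, E) be a finite bipartite graph with a matching M saturating A. For a vertex i ∈ X, there exists a matching M' of G saturating A that leaves i unmatched if and only if i is unmatched by M or i is reachable by an M-alternating path starting from some vertex of X unmatched by M. -/

import Mathlib

private lemma chainImp {α : Type*} {R R' : α → α → Prop} :
    ∀ (l : List α) (x : α), List.Chain R x l →
      (∀ y z, z ∈ l → R y z → R' y z) → List.Chain R' x l
  | [], _, _, _ => List.Chain.nil
  | z :: t, x, h, himp => by
    simp only [List.Chain] at h ⊢
    rw [List.chain_cons] at h ⊢
    exact ⟨himp x z (by simp) h.1,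
      chainImp t z h.2 fun y w hw => himp y w (by simp [hw])⟩

private lemma auxFlip {A X : Type*} (E : A → X → Prop) :
    ∀ (l : List X) (m : A → X), Function.Injective m → (∀ a, E a (m a)) →
      ∀ x₀, x₀ ∉ Set.range m →
      List.Chain (fun x y => ∃ a, E a x ∧ m a = y) x₀ l →
      ∃ m' : A → X, Function.Injective m' ∧ (∀ a, E a (m' a)) ∧
        ∀ j, (x₀ :: l).getLast? = some j → j ∉ Set.range m'
  | [], m, hm, hme, x₀, hx₀, _ =>
    ⟨m, hm, hme, fun j hj => by simp at hj; exact hj ▸ hx₀⟩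
  | x₁ :: t, m, hm, hme, x₀, hx₀, hchain => by
    simp only [List.Chain] at hchain
    rw [List.chain_cons] at hchain
    obtain ⟨⟨a, hEa, hma⟩, hct⟩ := hchain
    by_cases hx₁t : x₁ ∈ t
    · obtain ⟨t₁, t₂, rfl⟩ := List.append_of_mem hx₁t
      rw [List.isChain_cons_split] at hct
      obtain ⟨-, hct₂⟩ := hct
      obtain ⟨m', h1, h2, h3⟩ := auxFlip E (x₁ :: t₂) m hm hme x₀ hx₀
        (List.chain_cons.2 ⟨⟨a, hEa, hma⟩, hct₂⟩)
      refine ⟨m', h1, h2, fun j hj => h3 j ?_⟩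
      rw [List.getLast?_cons_cons] at hj ⊢
      rwa [← List.cons_append, List.getLast?_append_cons] at hj
    · -- flip a to x₀
      haveI := Classical.decEq A
      have hx₀x₁ : x₀ ≠ x₁ := fun h => hx₀ (h ▸ ⟨a, hma⟩)
      set m₂ : A → X := Function.update m a x₀ with hm₂def
      have hm₂a : m₂ a = x₀ := Function.update_self _ _ _
      have hm₂b : ∀ b, b ≠ a → m₂ b = m b := fun b hb => Function.update_of_ne hb _ _
      have hm₂inj : Function.Injective m₂ := by
        intro b c h
        by_cases hb : b = a <;> by_cases hc : c = a
        · rw [hb, hc]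
        · subst hb; rw [hm₂a, hm₂b c hc] at h; exact absurd ⟨c, h.symm⟩ hx₀
        · subst hc; rw [hm₂a, hm₂b b hb] at h; exact absurd ⟨b, h⟩ hx₀
        · exact hm (by rw [← hm₂b b hb, ← hm₂b c hc, h])
      have hm₂E : ∀ b, E b (m₂ b) := by
        intro b
        by_cases hb : b = a
        · rw [hb, hm₂a]; exact hb ▸ hEa
        · rw [hm₂b b hb]; exact hme b
      have hx₁ : x₁ ∉ Set.range m₂ := by
        rintro ⟨b, hb⟩
        by_cases hba : b = a
        · rw [hba, hm₂a] at hb; exact hx₀x₁ hb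
        · rw [hm₂b b hba] at hb; exact hba (hm (hb.trans hma.symm))
      have hchain₂ : List.Chain (fun x y => ∃ b, E b x ∧ m₂ b = y) x₁ t := by
        refine chainImp t x₁ hct ?_
        rintro y z hz ⟨b, hEb, hmb⟩
        have hba : b ≠ a := by
          rintro rfl
          have hzx : x₁ = z := hma.symm.trans hmb
          rw [← hzx] at hz
          exact hx₁t hz
        exact ⟨b, hEb, (hm₂b b hba).trans hmb⟩
      obtain ⟨m', h1, h2, h3⟩ := auxFlip E t m₂ hm₂inj hm₂E x₁ hx₁ hchain₂
      exact ⟨m', h1, h2, fun j hj => h3 j (by rwa [List.getLast?_cons_cons] at hj)⟩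
  termination_by l => l.length
  decreasing_by
  · subst_vars
    simp only [List.length_cons, List.length_append]
    omega
  · simp only [List.length_cons]
    omega

theorem stmt15 {A X : Type*} [Fintype A] [Fintype X] (E : A → X → Prop)
    (m : A → X) (hm : Function.Injective m) (hme : ∀ a, E a (m a)) (i : X) :
    (∃ m' : A → X, Function.Injective m' ∧ (∀ a, E a (m' a)) ∧ i ∉ Set.range m')
      ↔ (i ∉ Set.range m ∨
          ∃ x₀, x₀ ∉ Set.range m ∧
            Relation.ReflTransGen (fun x y => ∃ a, E a x ∧ m a = y) x₀ i) := by
  constructor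
  · rintro ⟨m', hm', hme', hi'⟩
    by_contra h
    push_neg at h
    obtain ⟨hi, h2⟩ := h
    set S : Set X := {x | Relation.ReflTransGen (fun x y => ∃ a, E a x ∧ m a = y) x i} with hS
    have hSr : ∀ x ∈ S, x ∈ Set.range m := by
      intro x hx
      by_contra hxr
      exact h2 x hxr hx
    have hg : ∀ x : S, m' (hSr x.1 x.2).choose ∈ S := by
      intro x
      exact Relation.ReflTransGen.head
        ⟨(hSr x.1 x.2).choose, hme' _, (hSr x.1 x.2).choose_spec⟩ x.2
    set g : S → S := fun x => ⟨m' (hSr x.1 x.2).choose, hg x⟩ with hgdef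
    have hginj : Function.Injective g := by
      intro x y hxy
      have h' : m' (hSr x.1 x.2).choose = m' (hSr y.1 y.2).choose :=
        congrArg Subtype.val hxy
      have := hm' h'
      apply Subtype.ext
      rw [← (hSr x.1 x.2).choose_spec, ← (hSr y.1 y.2).choose_spec, this]
    have hgsurj : Function.Surjective g := Finite.surjective_of_injective hginj
    obtain ⟨x, hx⟩ := hgsurj ⟨i, Relation.ReflTransGen.refl⟩
    exact hi' ⟨(hSr x.1 x.2).choose, congrArg Subtype.val hx⟩
  · rintro (hi | ⟨x₀, hx₀, hpath⟩)
    · exact ⟨m, hm, hme, hi⟩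
    · obtain ⟨l, hl₁, hl₂⟩ := List.exists_isChain_cons_of_relationReflTransGen hpath
      obtain ⟨m', h1, h2, h3⟩ := auxFlip E l m hm hme x₀ hx₀ hl₁
      exact ⟨m', h1, h2, h3 i (by rw [List.getLast?_eq_getLast (List.cons_ne_nil _ _), hl₂])⟩
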